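/- The matroid M(W) = (E, C(W)) induced by a nonzero finite-dimensional subspace W ⊆ K^E of dimension s is cofinitary: every circuit of the dual matroid M(W)* has at most s+1 elements. In particular M(W) is tame. -/

import Mathlib

/-- `IsCircuit W C` : C is a minimal nonempty support of an element of W. -/
def IsCircuit {K E : Type*} [Field K] (W : Submodule K (E → K)) (C : Set E) : Prop :=
  ∃ w ∈ W, w ≠ 0 ∧ Function.support w = C ∧
    ∀ w' ∈ W, w' ≠ 0 → Function.support w' ⊆ C → Function.support w' = C

/-- `IsDualBasis u B` : B = {j_1,…,j_s} ⊆ E is an s-element set with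
Span{u^{(j_1)},…,u^{(j_s)}} = K^s; these are the bases of the dual matroid
M(W)*. -/
def IsDualBasis {K E : Type*} [Field K] {s : ℕ} (u : E → (Fin s → K)) (B : Set E) : Prop :=
  ∃ j : Fin s → E, Function.Injective j ∧ Set.range j = B ∧
    Submodule.span K (Set.range (u ∘ j)) = ⊤

/-- the matroid M(W) of minimal supports of an s-dimensional
subspace W = span{φ_1,…,φ_s} ⊆ K^E is cofinitary: every cocircuit (a minimal
nonempty set contained in no basis of the dual matroid) has at most s+1
elements; in particular M(W) is tame: every intersection of a circuit and a
cocircuit is finite. -/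
theorem stmt9 {K E : Type*} [Field K] {s : ℕ} (hs : 0 < s)
    (φ : Fin s → (E → K)) (hφ : LinearIndependent K φ)
    (u : E → (Fin s → K)) (hu : ∀ j i, u j i = φ i j)
    (Cstar : Set E)
    (hCstar : Minimal (fun D : Set E =>
      D.Nonempty ∧ ∀ B : Set E, IsDualBasis u B → ¬ D ⊆ B) Cstar) :
    Cstar.Finite ∧ Nat.card Cstar ≤ s + 1 ∧
      ∀ C : Set E, IsCircuit (Submodule.span K (Set.range φ)) C →
        (C ∩ Cstar).Finite := by
  -- Key: any proper nonempty subset of Cstar is contained in a dual basis,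
  -- hence is finite of cardinality ≤ s.
  have key : ∀ D : Set E, D ⊆ Cstar → ¬ Cstar ⊆ D → D.Nonempty →
      D.Finite ∧ D.ncard ≤ s := by
    intro D hD hDne hne
    have hnP : ¬ (D.Nonempty ∧ ∀ B : Set E, IsDualBasis u B → ¬ D ⊆ B) :=
      fun hP => hDne (hCstar.2 hP hD)
    push_neg at hnP
    obtain ⟨B, hB, hDB⟩ := hnP hne
    obtain ⟨j, hj, hrange, -⟩ := hB
    have hBfin : B.Finite := hrange ▸ Set.finite_range j
    have hBcard : B.ncard ≤ s := by
      rw [← hrange, ← Nat.card_coe_set_eq, Nat.card_range_of_injective hj]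
      simp
    exact ⟨hBfin.subset hDB, le_trans (Set.ncard_le_ncard hDB hBfin) hBcard⟩
  have hfin : Cstar.Finite := by
    by_contra h
    obtain ⟨D, hDsub, hDfin, hDcard⟩ :=
      Set.Infinite.exists_subset_ncard_eq h (s + 1)
    have hne : D.Nonempty := by
      apply Set.nonempty_of_ncard_ne_zero; omega
    have hproper : ¬ Cstar ⊆ D := by
      intro hsub
      exact h (hDfin.subset hsub)
    have := (key D hDsub hproper hne).2
    omega
  refine ⟨hfin, ?_, fun C _ => hfin.inter_of_right C⟩
  rw [Nat.card_coe_set_eq]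
  by_contra h
  push_neg at h
  obtain ⟨D, hDsub, hDcard⟩ := Set.exists_subset_card_eq (s := Cstar) (n := s + 1) (by omega)
  have hne : D.Nonempty := by
    apply Set.nonempty_of_ncard_ne_zero; omega
  have hproper : ¬ Cstar ⊆ D := by
    intro hsub
    rw [Set.Subset.antisymm hsub hDsub] at h
    omega
  have := (key D hDsub hproper hne).2
  omega
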